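/- Let G be a graph with maximum degree Δ that admits a frozen (Δ+1)-colouring α. Then every colour class of α has the same size; in particular, Δ+1 divides the number of vertices of G. -/
import Mathlib


/-- If a graph `G` with maximum degree `Δ` admits a frozen
`(Δ+1)`-colouring `α`, then all colour classes of `α` have the same size,
and in particular `Δ+1` divides the number of vertices. -/
theorem stmt_1 {V : Type*} [Fintype V] [DecidableEq V] (G : SimpleGraph V)
    [DecidableRel G.Adj] (Δ : ℕ) (hΔ : ∀ v, G.degree v ≤ Δ)
    (α : V → Fin (Δ + 1))
    (hproper : ∀ u v, G.Adj u v → α u ≠ α v)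
    (hfrozen : ∀ v c, ∃ u, (u = v ∨ G.Adj v u) ∧ α u = c) :
    (∀ c c' : Fin (Δ + 1), Nat.card {v : V // α v = c} = Nat.card {v : V // α v = c'}) ∧
      (Δ + 1) ∣ Fintype.card V := by
  -- uniqueness of each colour in each closed neighbourhood
  have uniq : ∀ v u₁ u₂, (u₁ = v ∨ G.Adj v u₁) → (u₂ = v ∨ G.Adj v u₂) →
      α u₁ = α u₂ → u₁ = u₂ := by
    intro v u₁ u₂ h₁ h₂ hc
    set s : Finset V := insert v (G.neighborFinset v) with hs
    have hmem : ∀ u, (u = v ∨ G.Adj v u) ↔ u ∈ s := by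
      intro u
      simp [hs, SimpleGraph.mem_neighborFinset]
    have hcard : s.card ≤ Δ + 1 := by
      calc s.card ≤ (G.neighborFinset v).card + 1 := Finset.card_insert_le _ _
        _ ≤ Δ + 1 := by
            have := hΔ v
            rw [SimpleGraph.degree] at this
            omega
    have himg : s.image α = Finset.univ := by
      apply Finset.eq_univ_of_forall
      intro c
      obtain ⟨u, hu, huc⟩ := hfrozen v c
      exact Finset.mem_image.2 ⟨u, (hmem u).1 hu, huc⟩
    have hinj : Set.InjOn α s := by
      rw [← Finset.card_image_iff]
      have h1 : (s.image α).card = Δ + 1 := by simp [himg]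
      have h2 : (s.image α).card ≤ s.card := Finset.card_image_le
      omega
    exact hinj ((hmem u₁).1 h₁) ((hmem u₂).1 h₂) hc
  have key : ∀ c c' : Fin (Δ + 1),
      Nat.card {v : V // α v = c} = Nat.card {v : V // α v = c'} := by
    intro c c'
    -- build a bijection
    have hf : ∀ x : {v : V // α v = c}, ∃ u, ((u = x.1 ∨ G.Adj x.1 u) ∧ α u = c') :=
      fun x => hfrozen x.1 c'
    choose f hf1 hf2 using hf
    have hsym : ∀ (a b : V), (a = b ∨ G.Adj b a) → (b = a ∨ G.Adj a b) := by
      intro a b h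
      rcases h with h | h
      · exact Or.inl h.symm
      · exact Or.inr h.symm
    apply Nat.card_eq_of_bijective (fun x => ⟨f x, hf2 x⟩)
    constructor
    · intro x y hxy
      have hfe : f x = f y := congrArg Subtype.val hxy
      -- x.1 and y.1 are both in closed nbhd of f x with colour c
      have := uniq (f x) x.1 y.1 (hsym _ _ (hf1 x))
        (by rw [hfe] at *; exact hsym _ _ (hf1 y)) (by rw [x.2, y.2])
      exact Subtype.ext this
    · intro u
      obtain ⟨w, hw1, hw2⟩ := hfrozen u.1 c
      refine ⟨⟨w, hw2⟩, ?_⟩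
      apply Subtype.ext
      exact uniq w (f ⟨w, hw2⟩) u.1 (hf1 _) (hsym _ _ hw1)
        (by rw [hf2, u.2])
  refine ⟨key, ?_⟩
  have hcardV : Fintype.card V = ∑ c : Fin (Δ + 1), (Finset.univ.filter (fun v => α v = c)).card := by
    rw [← Finset.card_eq_sum_card_fiberwise (fun v _ => Finset.mem_univ (α v))]
    simp
  have heq : ∀ c : Fin (Δ + 1), (Finset.univ.filter (fun v => α v = c)).card
      = Nat.card {v : V // α v = c} := by
    intro c
    rw [Nat.card_eq_fintype_card, Fintype.card_subtype]
  rw [hcardV]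
  have : ∀ c : Fin (Δ + 1), (Finset.univ.filter (fun v => α v = c)).card
      = (Finset.univ.filter (fun v => α v = 0)).card := by
    intro c; rw [heq, heq, key]
  rw [Finset.sum_congr rfl (fun c _ => this c)]
  simp [Finset.sum_const, mul_comm]
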